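/- Let K be a finitely coherent SDS and let F := f̂(K) = {E(W) : W a finite subset of K} be the corresponding proper filter on (E_fin, ⊆). Then F is a prime filter on (E_fin, ⊆) if and only if K is complete, i.e. for all A₁, A₂ ⊆ T, A₁ ∪ A₂ ∈ K implies A₁ ∈ K or A₂ ∈ K. -/
import Mathlib


universe u

variable {T : Type u}

/-- `cl` is a closure operator on subsets of `T`. -/
def IsClosure (cl : Set T → Set T) : Prop :=
  (∀ A : Set T, A ⊆ cl A) ∧
  (∀ A B : Set T, A ⊆ B → cl A ⊆ cl B) ∧
  (∀ A : Set T, cl (cl A) = cl A)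

/-- `cl` is finitary: the closure of a set is the union of the closures of its
finite subsets. -/
def IsFinitary (cl : Set T → Set T) : Prop :=
  ∀ A : Set T, cl A = ⋃ F ∈ {F : Set T | F.Finite ∧ F ⊆ A}, cl F

/-- A coherent set of desirable things (SDT): closed and avoiding the forbidden
things `Tneg`. -/
def CohSDT (cl : Set T → Set T) (Tneg : Set T) (D : Set T) : Prop :=
  cl D = D ∧ D ∩ Tneg = ∅

/-- Selection maps of a collection `W` of sets of things: maps choosing an
element of each member of `W`. -/
def Sel (W : Set (Set T)) : Type u :=
  {σ : Set T → T // ∀ A ∈ W, σ A ∈ A}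

/-- A coherent set of desirable sets of things (SDS): axioms K1–K5. -/
def CohSDS (cl : Set T → Set T) (Tneg : Set T) (K : Set (Set T)) : Prop :=
  (∅ : Set T) ∉ K ∧
  (∀ A₁ ∈ K, ∀ A₂ : Set T, A₁ ⊆ A₂ → A₂ ∈ K) ∧
  (∀ A ∈ K, A \ Tneg ∈ K) ∧
  (∀ t ∈ cl (∅ : Set T), ({t} : Set T) ∈ K) ∧
  (∀ W ⊆ K, W.Nonempty →
    ∀ f : Sel W → T, (∀ σ : Sel W, f σ ∈ cl (σ.1 '' W)) → Set.range f ∈ K)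

/-- A finitely coherent SDS: axioms K1–K4 together with K5 restricted to
nonempty finite subcollections. -/
def FinCohSDS (cl : Set T → Set T) (Tneg : Set T) (K : Set (Set T)) : Prop :=
  (∅ : Set T) ∉ K ∧
  (∀ A₁ ∈ K, ∀ A₂ : Set T, A₁ ⊆ A₂ → A₂ ∈ K) ∧
  (∀ A ∈ K, A \ Tneg ∈ K) ∧
  (∀ t ∈ cl (∅ : Set T), ({t} : Set T) ∈ K) ∧
  (∀ W ⊆ K, W.Finite → W.Nonempty →
    ∀ f : Sel W → T, (∀ σ : Sel W, f σ ∈ cl (σ.1 '' W)) → Set.range f ∈ K)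

/-- A finitely coherent set of desirable finite sets of things (SDFS):
axioms F1–F5. -/
def FinCohSDFS (cl : Set T → Set T) (Tneg : Set T) (K : Set (Set T)) : Prop :=
  (∀ F ∈ K, F.Finite) ∧
  (∅ : Set T) ∉ K ∧
  (∀ F₁ ∈ K, ∀ F₂ : Set T, F₂.Finite → F₁ ⊆ F₂ → F₂ ∈ K) ∧
  (∀ F ∈ K, F \ Tneg ∈ K) ∧
  (∀ t ∈ cl (∅ : Set T), ({t} : Set T) ∈ K) ∧
  (∀ W ⊆ K, W.Finite → W.Nonempty →
    ∀ f : Sel W → T, (∀ σ : Sel W, f σ ∈ cl (σ.1 '' W)) → Set.range f ∈ K)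

/-- The set of things whose singletons belong to `K`. -/
def sdt (K : Set (Set T)) : Set T := {t | ({t} : Set T) ∈ K}

/-- The SDS of all sets of things meeting `D`. -/
def sds (D : Set T) : Set (Set T) := {A | (A ∩ D).Nonempty}

/-- The SDFS of all finite sets of things meeting `D`. -/
def sdfs (D : Set T) : Set (Set T) := {F | F.Finite ∧ (F ∩ D).Nonempty}

/-- The event `𝒟_A` of all coherent SDTs meeting `A`. -/
def evA (cl : Set T → Set T) (Tneg : Set T) (A : Set T) : Set (Set T) :=
  {D | CohSDT cl Tneg D ∧ (A ∩ D).Nonempty}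

/-- The event `E(W)` of all coherent SDTs meeting every member of `W`
(with `E(∅)` equal to the set of all coherent SDTs). -/
def ev (cl : Set T → Set T) (Tneg : Set T) (W : Set (Set T)) : Set (Set T) :=
  {D | CohSDT cl Tneg D ∧ ∀ A ∈ W, (A ∩ D).Nonempty}

/-- An SDS is conjunctive if every desirable set contains a desirable
singleton. -/
def Conjunctive (K : Set (Set T)) : Prop :=
  ∀ A ∈ K, ∃ t ∈ A, ({t} : Set T) ∈ K

/-- Completeness of an SDS. -/
def CompleteSDS (K : Set (Set T)) : Prop :=
  ∀ A₁ A₂ : Set T, A₁ ∪ A₂ ∈ K → A₁ ∈ K ∨ A₂ ∈ K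

/-- The finitary part `K^f` of an SDS. -/
def finPart (K : Set (Set T)) : Set (Set T) :=
  {A | ∃ B ∈ K, B.Finite ∧ B ⊆ A}

/-- An SDS is finitary if every desirable set has a finite desirable subset. -/
def FinitarySDS (K : Set (Set T)) : Prop :=
  ∀ A ∈ K, ∃ B, B.Finite ∧ B ⊆ A ∧ B ∈ K

/-- The lattice of events `E`. -/
def Ecal (cl : Set T → Set T) (Tneg : Set T) : Set (Set (Set T)) :=
  {E | ∃ W : Set (Set T), E = ev cl Tneg W}

/-- The lattice of finitary events `E_fin`. -/
def Efin (cl : Set T → Set T) (Tneg : Set T) : Set (Set (Set T)) :=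
  {E | ∃ W : Set (Set T), W.Finite ∧ E = ev cl Tneg W}

/-- A filter on a lattice of events `L` ordered by inclusion. -/
def IsFilterOn (L F : Set (Set (Set T))) : Prop :=
  F ⊆ L ∧ F.Nonempty ∧
  (∀ E₁ ∈ F, ∀ E₂ ∈ L, E₁ ⊆ E₂ → E₂ ∈ F) ∧
  (∀ E₁ ∈ F, ∀ E₂ ∈ F, E₁ ∩ E₂ ∈ F)

/-- A proper filter on `L`. -/
def IsProperFilterOn (L F : Set (Set (Set T))) : Prop :=
  IsFilterOn L F ∧ F ≠ L

/-- A prime filter on `L`. -/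
def IsPrimeFilterOn (L F : Set (Set (Set T))) : Prop :=
  IsProperFilterOn L F ∧
  ∀ E₁ ∈ L, ∀ E₂ ∈ L, E₁ ∪ E₂ ∈ F → E₁ ∈ F ∨ E₂ ∈ F

/-- A proper principal filter on `L`: the upset of some nonempty `E₀ ∈ L`. -/
def IsProperPrincipalFilterOn (L F : Set (Set (Set T))) : Prop :=
  ∃ E₀ ∈ L, E₀ ≠ (∅ : Set (Set T)) ∧ F = {E' | E' ∈ L ∧ E₀ ⊆ E'}

/-- The map `f̂` sending an SDS to the collection of events of its finite
subcollections. -/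
def fhat (cl : Set T → Set T) (Tneg : Set T) (K : Set (Set T)) :
    Set (Set (Set T)) :=
  {E | ∃ W : Set (Set T), W ⊆ K ∧ W.Finite ∧ E = ev cl Tneg W}

/-- The map `f` sending an SDS to the collection of events of all of its
subcollections. -/
def fprin (cl : Set T → Set T) (Tneg : Set T) (K : Set (Set T)) :
    Set (Set (Set T)) :=
  {E | ∃ W : Set (Set T), W ⊆ K ∧ E = ev cl Tneg W}

/-- The map `d` sending a collection of events to the SDS it determines. -/
def dmap (cl : Set T → Set T) (Tneg : Set T) (F : Set (Set (Set T))) :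
    Set (Set T) :=
  {A : Set T | evA cl Tneg A ∈ F}

/-- `K` is finitely consistent: it is included in some finitely coherent SDS. -/
def FinConsistent (cl : Set T → Set T) (Tneg : Set T) (K : Set (Set T)) : Prop :=
  ∃ K' : Set (Set T), FinCohSDS cl Tneg K' ∧ K ⊆ K'

/-- `K` is consistent: it is included in some coherent SDS. -/
def Consistent (cl : Set T → Set T) (Tneg : Set T) (K : Set (Set T)) : Prop :=
  ∃ K' : Set (Set T), CohSDS cl Tneg K' ∧ K ⊆ K'

/-- The finitary closure operator on SDSes (with value `𝒫(T)` when `K` is not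
finitely consistent, via the empty-intersection convention). -/
def clFin (cl : Set T → Set T) (Tneg : Set T) (K : Set (Set T)) : Set (Set T) :=
  ⋂₀ {K' : Set (Set T) | FinCohSDS cl Tneg K' ∧ K ⊆ K'}

/-- The closure operator on SDSes (with value `𝒫(T)` when `K` is not
consistent, via the empty-intersection convention). -/
def clSDS (cl : Set T → Set T) (Tneg : Set T) (K : Set (Set T)) : Set (Set T) :=
  ⋂₀ {K' : Set (Set T) | CohSDS cl Tneg K' ∧ K ⊆ K'}

set_option linter.unusedSectionVars false

section Aux
variable {T : Type u} [Nonempty T]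

/-- Key lemma: if every coherent SDT meeting all members of a finite `W ⊆ K`
also meets `A`, then `A ∈ K`. -/
lemma key_lemma (cl : Set T → Set T) (Tneg : Set T)
    (hcl : IsClosure cl) (hsan : cl (∅ : Set T) ∩ Tneg = ∅)
    (K : Set (Set T)) (hK : FinCohSDS cl Tneg K)
    (W : Set (Set T)) (hWK : W ⊆ K) (hWfin : W.Finite) (A : Set T)
    (h : ev cl Tneg W ⊆ evA cl Tneg A) : A ∈ K := by
  obtain ⟨hcl1, hcl2, hcl3⟩ := hcl
  obtain ⟨hK1, hK2, hK3, hK4, hK5⟩ := hK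
  by_contra hA
  rcases W.eq_empty_or_nonempty with rfl | hWne
  · have hD : cl (∅ : Set T) ∈ ev cl Tneg (∅ : Set (Set T)) := by
      exact ⟨⟨hcl3 _, hsan⟩, fun B hB => absurd hB (Set.notMem_empty _)⟩
    obtain ⟨t, htA, htD⟩ := (h hD).2
    exact hA (hK2 _ (hK4 t htD) A (Set.singleton_subset_iff.2 htA))
  · have hsel : ∀ σ : Sel W, (cl (σ.1 '' W) ∩ (Tneg ∪ A)).Nonempty := by
      intro σ
      by_contra hne
      rw [Set.not_nonempty_iff_eq_empty] at hne
      have hDcoh : CohSDT cl Tneg (cl (σ.1 '' W)) := by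
        refine ⟨hcl3 _, Set.eq_empty_of_subset_empty ?_⟩
        rw [← hne]
        exact Set.inter_subset_inter_right _ Set.subset_union_left
      have hDev : cl (σ.1 '' W) ∈ ev cl Tneg W :=
        ⟨hDcoh, fun B hB =>
          ⟨σ.1 B, σ.2 B hB, hcl1 _ (Set.mem_image_of_mem _ hB)⟩⟩
      obtain ⟨t, htA, htD⟩ := (h hDev).2
      have : t ∈ cl (σ.1 '' W) ∩ (Tneg ∪ A) := ⟨htD, Or.inr htA⟩
      rw [hne] at this
      exact this
    choose f hf using hsel
    have hrange : Set.range f ∈ K := hK5 W hWK hWfin hWne f (fun σ => (hf σ).1)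
    have hsub : Set.range f ⊆ Tneg ∪ A := by
      rintro x ⟨σ, rfl⟩; exact (hf σ).2
    have h1 : Tneg ∪ A ∈ K := hK2 _ hrange _ hsub
    have h2 : (Tneg ∪ A) \ Tneg ∈ K := hK3 _ h1
    refine hA (hK2 _ h2 A ?_)
    intro x hx
    rcases hx.1 with h' | h'
    · exact absurd h' hx.2
    · exact h'

lemma ev_union_ev (cl : Set T → Set T) (Tneg : Set T) (W₁ W₂ : Set (Set T)) :
    ev cl Tneg W₁ ∪ ev cl Tneg W₂ =
      ev cl Tneg ((fun p : Set T × Set T => p.1 ∪ p.2) '' (W₁ ×ˢ W₂)) := by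
  ext D
  constructor
  · rintro (⟨hD, hmeet⟩ | ⟨hD, hmeet⟩) <;> refine ⟨hD, ?_⟩ <;>
      rintro C ⟨⟨A, B⟩, ⟨hA, hB⟩, rfl⟩
    · obtain ⟨t, ht, htD⟩ := hmeet A hA
      exact ⟨t, Or.inl ht, htD⟩
    · obtain ⟨t, ht, htD⟩ := hmeet B hB
      exact ⟨t, Or.inr ht, htD⟩
  · rintro ⟨hD, hmeet⟩
    by_cases h1 : ∀ A ∈ W₁, (A ∩ D).Nonempty
    · exact Or.inl ⟨hD, h1⟩
    · push_neg at h1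
      obtain ⟨A₀, hA₀, hA₀e⟩ := h1
      refine Or.inr ⟨hD, fun B hB => ?_⟩
      obtain ⟨t, ht, htD⟩ := hmeet (A₀ ∪ B) ⟨⟨A₀, B⟩, ⟨hA₀, hB⟩, rfl⟩
      rcases ht with ht | ht
      · exact absurd (Set.mem_inter ht htD) (by rw [hA₀e]; exact Set.notMem_empty t)
      · exact ⟨t, ht, htD⟩

lemma ev_inter_ev (cl : Set T → Set T) (Tneg : Set T) (W₁ W₂ : Set (Set T)) :
    ev cl Tneg W₁ ∩ ev cl Tneg W₂ = ev cl Tneg (W₁ ∪ W₂) := by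
  ext D
  constructor
  · rintro ⟨⟨hD, h1⟩, ⟨_, h2⟩⟩
    exact ⟨hD, fun B hB => hB.elim (h1 B) (h2 B)⟩
  · rintro ⟨hD, h⟩
    exact ⟨⟨hD, fun B hB => h B (Or.inl hB)⟩, ⟨hD, fun B hB => h B (Or.inr hB)⟩⟩

lemma ev_subset_evA (cl : Set T → Set T) (Tneg : Set T) {W : Set (Set T)}
    {A : Set T} (hA : A ∈ W) : ev cl Tneg W ⊆ evA cl Tneg A :=
  fun _ hD => ⟨hD.1, hD.2 A hA⟩

end Aux

/-- The filter `f̂(K)` corresponding to a finitely coherent SDS `K` is prime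
iff `K` is complete. -/
theorem prime_iff_complete (T : Type u) [Nonempty T]
    (cl : Set T → Set T) (Tneg : Set T)
    (hcl : IsClosure cl) (hsan : cl (∅ : Set T) ∩ Tneg = ∅)
    (K : Set (Set T)) (hK : FinCohSDS cl Tneg K) :
    IsPrimeFilterOn (Efin cl Tneg) (fhat cl Tneg K) ↔ CompleteSDS K := by
  constructor
  · rintro ⟨-, hprime⟩ A₁ A₂ hA
    have hu : ev cl Tneg ({A₁ ∪ A₂} : Set (Set T)) =
        ev cl Tneg {A₁} ∪ ev cl Tneg {A₂} := by
      rw [ev_union_ev]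
      simp
    have h1 : ev cl Tneg ({A₁ ∪ A₂} : Set (Set T)) ∈ fhat cl Tneg K :=
      ⟨{A₁ ∪ A₂}, Set.singleton_subset_iff.2 hA, Set.finite_singleton _, rfl⟩
    rw [hu] at h1
    rcases hprime _ ⟨{A₁}, Set.finite_singleton _, rfl⟩ _
        ⟨{A₂}, Set.finite_singleton _, rfl⟩ h1 with h | h
    · obtain ⟨W, hWK, hWfin, hWev⟩ := h
      refine Or.inl (key_lemma cl Tneg hcl hsan K hK W hWK hWfin A₁ ?_)
      rw [← hWev]
      exact ev_subset_evA cl Tneg (Set.mem_singleton _)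
    · obtain ⟨W, hWK, hWfin, hWev⟩ := h
      refine Or.inr (key_lemma cl Tneg hcl hsan K hK W hWK hWfin A₂ ?_)
      rw [← hWev]
      exact ev_subset_evA cl Tneg (Set.mem_singleton _)
  · intro hcomp
    refine ⟨⟨⟨?_, ?_, ?_, ?_⟩, ?_⟩, ?_⟩
    · rintro E ⟨W, hWK, hWfin, rfl⟩
      exact ⟨W, hWfin, rfl⟩
    · exact ⟨ev cl Tneg ∅, ∅, Set.empty_subset _, Set.finite_empty, rfl⟩
    · rintro E₁ ⟨W₁, hW₁K, hW₁f, rfl⟩ E₂ ⟨W₂, hW₂f, rfl⟩ hsub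
      refine ⟨W₂, fun A hA => ?_, hW₂f, rfl⟩
      exact key_lemma cl Tneg hcl hsan K hK W₁ hW₁K hW₁f A
        (fun D hD => ev_subset_evA cl Tneg hA (hsub hD))
    · rintro E₁ ⟨W₁, h1, f1, rfl⟩ E₂ ⟨W₂, h2, f2, rfl⟩
      exact ⟨W₁ ∪ W₂, Set.union_subset h1 h2, f1.union f2,
        ev_inter_ev cl Tneg W₁ W₂⟩
    · intro heq
      have hempty : ev cl Tneg ({∅} : Set (Set T)) = ∅ := by
        refine Set.eq_empty_iff_forall_notMem.2 fun D hD => ?_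
        obtain ⟨t, ht, -⟩ := hD.2 ∅ (Set.mem_singleton _)
        exact ht
      have hmem : (∅ : Set (Set T)) ∈ Efin cl Tneg :=
        ⟨{∅}, Set.finite_singleton _, hempty.symm⟩
      rw [← heq] at hmem
      obtain ⟨W, hWK, hWf, hWev⟩ := hmem
      have : (∅ : Set T) ∈ K := by
        refine key_lemma cl Tneg hcl hsan K hK W hWK hWf ∅ ?_
        rw [← hWev]
        exact Set.empty_subset _
      exact hK.1 this
    · rintro E₁ ⟨W₁, hW₁f, rfl⟩ E₂ ⟨W₂, hW₂f, rfl⟩ ⟨W₃, hW₃K, hW₃f, h3⟩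
      have hpairs : ∀ A ∈ W₁, ∀ B ∈ W₂, A ∪ B ∈ K := by
        intro A hA B hB
        refine key_lemma cl Tneg hcl hsan K hK W₃ hW₃K hW₃f (A ∪ B) ?_
        rw [← h3, ev_union_ev]
        exact ev_subset_evA cl Tneg ⟨⟨A, B⟩, ⟨hA, hB⟩, rfl⟩
      by_cases h1 : W₁ ⊆ K
      · exact Or.inl ⟨W₁, h1, hW₁f, rfl⟩
      · obtain ⟨A₀, hA₀, hA₀K⟩ := Set.not_subset.1 h1
        refine Or.inr ⟨W₂, fun B hB => ?_, hW₂f, rfl⟩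
        rcases hcomp A₀ B (hpairs A₀ hA₀ B hB) with h | h
        · exact absurd h hA₀K
        · exact h
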